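/- The dyadic odometer is rigid along the sequence (2^n), but not uniformly: with A_n = {x : x_{n+1} = 1}, one has μ(A_n Δ T^{2^n}(A_n)) = 1 for every n. -/

import Mathlib

open MeasureTheory Filter Topology
open scoped ENNReal

/-- The dyadic odometer: addition of 1 with carry, least significant digit first. -/
def odometer (x : ℕ → Bool) : ℕ → Bool :=
  fun n => if ∀ i < n, x i = true then !(x n) else x n

/-- Inverse of the odometer: subtraction of 1 with borrow. -/
def odometerInv (x : ℕ → Bool) : ℕ → Bool :=
  fun n => if ∀ i < n, x i = false then !(x n) else x n

lemma forall_lt_succ_left {P : ℕ → Prop} {j : ℕ} :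
    (∀ i < j + 1, P i) ↔ P 0 ∧ ∀ i < j, P (i + 1) := by
  constructor
  · intro h; exact ⟨h 0 (Nat.succ_pos j), fun i hi => h (i + 1) (by omega)⟩
  · rintro ⟨h0, h⟩ i hi
    cases i with
    | zero => exact h0
    | succ i => exact h i (by omega)

lemma odometer_zero (y : ℕ → Bool) : odometer y 0 = !(y 0) := by
  simp [odometer]

lemma odometerInv_zero (y : ℕ → Bool) : odometerInv y 0 = !(y 0) := by
  simp [odometerInv]

lemma odometer_odometerInv (y : ℕ → Bool) : odometer (odometerInv y) = y := by
  funext n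
  have key : (∀ i < n, odometerInv y i = true) ↔ (∀ i < n, y i = false) := by
    constructor
    · intro h
      by_contra hc
      push_neg at hc
      obtain ⟨i, hi, hyi⟩ := hc
      have hex : ∃ j, y j = true ∧ j < n := ⟨i, by simpa using hyi, hi⟩
      classical
      set m := Nat.find hex with hm
      obtain ⟨hym, hmn⟩ := Nat.find_spec hex
      have hbelow : ∀ j < m, y j = false := by
        intro j hj
        have := Nat.find_min hex hj
        push_neg at this
        by_contra hc'
        exact absurd (this (by simpa using hc')) (by omega)
      have : odometerInv y m = false := by
        simp [odometerInv, if_pos hbelow, (by rw [hm]; exact hym : y m = true)]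
      rw [h m hmn] at this
      simp at this
    · intro h i hi
      have : ∀ j < i, y j = false := fun j hj => h j (hj.trans hi)
      simp [odometerInv, if_pos this, h i hi]
  by_cases h : ∀ i < n, y i = false
  · show (if ∀ i < n, odometerInv y i = true then !(odometerInv y n) else odometerInv y n) = y n
    rw [if_pos (key.mpr h),
      show odometerInv y n = !(y n) from by simp [odometerInv, if_pos h]]
    simp
  · show (if ∀ i < n, odometerInv y i = true then !(odometerInv y n) else odometerInv y n) = y n
    rw [if_neg (fun hc => h (key.mp hc))]
    simp [odometerInv, if_neg h]

lemma odometer_two_succ (y : ℕ → Bool) (i : ℕ) :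
    odometer (odometer y) (i + 1) = odometer (fun j => y (j + 1)) i := by
  cases h0 : y 0 with
  | false =>
    have hz : odometer y 0 = true := by simp [odometer_zero, h0]
    have htail : ∀ k, odometer y (k + 1) = y (k + 1) := by
      intro k
      have : ¬ (∀ m < k + 1, y m = true) := by
        intro h; have := h 0 (Nat.succ_pos k); rw [h0] at this; simp at this
      show (if ∀ m < k + 1, y m = true then !(y (k + 1)) else y (k + 1)) = y (k + 1); rw [if_neg this]
    have hcond : (∀ k < i + 1, odometer y k = true) ↔ (∀ k < i, y (k + 1) = true) := by
      rw [forall_lt_succ_left]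
      simp only [hz, htail, true_and]
    show (if ∀ k < i + 1, odometer y k = true then !(odometer y (i+1)) else odometer y (i+1))
        = odometer (fun j => y (j + 1)) i
    rw [htail]
    by_cases hc : ∀ k < i, y (k + 1) = true
    · rw [if_pos (hcond.mpr hc)]
      simp [odometer, if_pos hc]
    · rw [if_neg (fun h => hc (hcond.mp h))]
      simp [odometer, if_neg hc]
  | true =>
    have hz : odometer y 0 = false := by simp [odometer_zero, h0]
    have hcondout : ¬ (∀ k < i + 1, odometer y k = true) := by
      intro h; have := h 0 (Nat.succ_pos i); rw [hz] at this; simp at this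
    show (if ∀ k < i + 1, odometer y k = true then !(odometer y (i+1)) else odometer y (i+1))
        = odometer (fun j => y (j + 1)) i
    rw [if_neg hcondout]
    have hcond : (∀ m < i + 1, y m = true) ↔ (∀ m < i, y (m + 1) = true) := by
      rw [forall_lt_succ_left]
      simp [h0]
    by_cases hc : ∀ m < i, y (m + 1) = true
    · simp only [odometer, if_pos (hcond.mpr hc), if_pos hc]
    · simp only [odometer, if_neg (fun h => hc (hcond.mp h)), if_neg hc]

lemma iterate_odometer (n : ℕ) (x : ℕ → Bool) :
    odometer^[2 ^ n] x = fun i => if i < n then x i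
      else odometer (fun j => x (j + n)) (i - n) := by
  induction n generalizing x with
  | zero =>
    funext i
    simp [Function.iterate_one]
  | succ n ih =>
    have h2 : 2 ^ (n + 1) = 2 ^ n + 2 ^ n := by ring
    rw [h2, Function.iterate_add_apply, ih x, ih]
    funext i
    set y : ℕ → Bool := fun i => if i < n then x i else odometer (fun j => x (j + n)) (i - n)
      with hy
    have htaily : (fun j => y (j + n)) = odometer (fun j => x (j + n)) := by
      funext j
      simp only [hy]
      rw [if_neg (by omega)]
      congr 1
      omega
    by_cases hi : i < n
    · simp only [if_pos hi, if_pos (by omega : i < n + 1), hy, if_pos hi]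
    · rw [if_neg hi]
      by_cases hin : i = n
      · rw [if_pos (show i < n + 1 by omega), htaily,
          show i - n = 0 from by omega,
          show odometer (odometer fun j => x (j + n)) 0
            = !((odometer fun j => x (j + n)) 0) from odometer_zero _,
          odometer_zero, hin]
        simp
      · have hin' : n + 1 ≤ i := by omega
        rw [if_neg (by omega : ¬ i < n + 1)]
        rw [htaily]
        have : i - n = (i - (n + 1)) + 1 := by omega
        rw [this, odometer_two_succ]
        congr 1
        funext j
        congr 1
        omega

theorem stmt_10 (μ : Measure (ℕ → Bool)) [IsProbabilityMeasure μ]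
    (hcyl : ∀ (k : ℕ) (b : ℕ → Bool),
      μ {x : ℕ → Bool | ∀ i < k, x i = b i} = (1 / 2 : ℝ≥0∞) ^ k) :
    (∀ (k : ℕ) (b : ℕ → Bool), ∀ n ≥ k,
      μ (symmDiff (odometer^[2 ^ n] ⁻¹' {x : ℕ → Bool | ∀ i < k, x i = b i})
        {x : ℕ → Bool | ∀ i < k, x i = b i}) = 0) ∧
    (∀ n : ℕ,
      μ (symmDiff {x : ℕ → Bool | x n = true}
        (odometer^[2 ^ n] '' {x : ℕ → Bool | x n = true})) = 1) := by
  constructor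
  · intro k b n hn
    have hpre : odometer^[2 ^ n] ⁻¹' {x : ℕ → Bool | ∀ i < k, x i = b i}
        = {x : ℕ → Bool | ∀ i < k, x i = b i} := by
      ext x
      simp only [Set.mem_preimage, Set.mem_setOf_eq, iterate_odometer]
      constructor
      · intro h i hi
        have := h i hi
        rwa [if_pos (by omega : i < n)] at this
      · intro h i hi
        rw [if_pos (by omega : i < n)]
        exact h i hi
    rw [hpre, symmDiff_self]
    exact measure_empty
  · intro n
    have himg : odometer^[2 ^ n] '' {x : ℕ → Bool | x n = true}
        = {y : ℕ → Bool | y n = false} := by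
      ext y
      constructor
      · rintro ⟨x, hx, rfl⟩
        simp only [Set.mem_setOf_eq] at hx ⊢
        rw [iterate_odometer]
        simp only [if_neg (lt_irrefl n), Nat.sub_self, odometer_zero]
        simp [hx]
      · intro hy
        simp only [Set.mem_setOf_eq] at hy
        refine ⟨fun i => if i < n then y i else odometerInv (fun j => y (j + n)) (i - n),
          ?_, ?_⟩
        · simp only [Set.mem_setOf_eq, if_neg (lt_irrefl n), Nat.sub_self, odometerInv_zero]
          simp [hy]
        · rw [iterate_odometer]
          funext i
          by_cases hi : i < n
          · simp [hi]
          · rw [if_neg hi]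
            have htail : (fun j => (fun i => if i < n then y i
                else odometerInv (fun j => y (j + n)) (i - n)) (j + n))
                = odometerInv (fun j => y (j + n)) := by
              funext j
              simp only []
              rw [if_neg (by omega)]
              congr 1
              omega
            rw [htail, odometer_odometerInv]
            congr 1
            omega
    rw [himg]
    have huniv : symmDiff {x : ℕ → Bool | x n = true} {y : ℕ → Bool | y n = false}
        = Set.univ := by
      ext y
      simp only [Set.mem_univ, iff_true, Set.mem_symmDiff, Set.mem_setOf_eq]
      cases h : y n <;> simp [h]
    rw [huniv]
    exact measure_univ
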